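/- Let f : [a,b] → ℝ be continuously differentiable with f' Φ'-superadditive, where Φ : [0,b-a] → ℝ≥0 is continuously differentiable, Φ' ≥ 0, Φ(0) = 0. Let a₁,...,aₙ satisfy the Jensen–Steffensen conditions (all partial sums in [0, Aₙ], Aₙ > 0) and x₁ ≤ ... ≤ xₙ in [a,b], x̄ = (1/Aₙ)∑ aᵢxᵢ. Then the refined Jensen–Steffensen inequality holds: (1/Aₙ)∑ aᵢ f(xᵢ) ≥ f(x̄) + (1/Aₙ)∑ aᵢ Φ(|xᵢ - x̄|). -/

import Mathlib

theorem abelA (w g : ℕ → ℝ) : ∀ (k : ℕ), (∀ j ≤ k, 0 ≤ ∑ i ∈ Finset.range j, w i) →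
    (∀ i, i + 1 < k → g (i + 1) ≤ g i) →
    (∑ i ∈ Finset.range k, w i) * g (k - 1) ≤ ∑ i ∈ Finset.range k, w i * g i := by
  intro k
  induction k with
  | zero => simp
  | succ k ih =>
    intro hA hg
    have h1 := ih (fun j hj => hA j (le_trans hj (Nat.le_succ k)))
      (fun i hi => hg i (Nat.lt_succ_of_lt hi))
    have hAk : 0 ≤ ∑ i ∈ Finset.range k, w i := hA k (Nat.le_succ k)
    rw [Finset.sum_range_succ, Finset.sum_range_succ, Nat.add_sub_cancel, add_mul]
    rcases Nat.eq_zero_or_pos k with hk | hk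
    · subst hk; simp
    · have hgk : g k ≤ g (k - 1) := by
        have h := hg (k - 1) (by omega)
        rwa [Nat.sub_add_cancel hk] at h
      have h2 : (∑ i ∈ Finset.range k, w i) * g k ≤ (∑ i ∈ Finset.range k, w i) * g (k - 1) :=
        mul_le_mul_of_nonneg_left hgk hAk
      linarith

theorem abelB (w g : ℕ → ℝ) (n : ℕ) : ∀ (d k : ℕ), n = k + d →
    (∀ j, k ≤ j → j ≤ n → 0 ≤ ∑ i ∈ Finset.Ico j n, w i) →
    (∀ i, k ≤ i → i + 1 < n → g i ≤ g (i + 1)) →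
    (∑ i ∈ Finset.Ico k n, w i) * g k ≤ ∑ i ∈ Finset.Ico k n, w i * g i := by
  intro d
  induction d with
  | zero =>
    intro k hk _ _
    have : k = n := by omega
    subst this
    simp
  | succ d ih =>
    intro k hk hB hg
    have hkn : k < n := by omega
    rw [Finset.sum_eq_sum_Ico_succ_bot hkn, Finset.sum_eq_sum_Ico_succ_bot hkn
      (f := fun i => w i * g i), add_mul]
    have h1 := ih (k + 1) (by omega) (fun j hj hj' => hB j (by omega) hj')
      (fun i hi => hg i (by omega))
    by_cases hk1 : k + 1 < n
    · have hg1 : g k ≤ g (k + 1) := hg k le_rfl hk1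
      have hB1 : 0 ≤ ∑ i ∈ Finset.Ico (k + 1) n, w i := hB (k + 1) (by omega) (by omega)
      have h2 : (∑ i ∈ Finset.Ico (k + 1) n, w i) * g k ≤
          (∑ i ∈ Finset.Ico (k + 1) n, w i) * g (k + 1) := mul_le_mul_of_nonneg_left hg1 hB1
      linarith
    · have he : Finset.Ico (k + 1) n = ∅ := Finset.Ico_eq_empty (by omega)
      simp [he]

/-- refined Jensen–Steffensen inequality for functions with
Φ'-superadditive derivative. -/
theorem stmt3 (a b : ℝ) (hab : a < b) (f f' Φ Φ' : ℝ → ℝ)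
    (hf : ∀ x ∈ Set.Icc a b, HasDerivAt f (f' x) x)
    (hf'c : ContinuousOn f' (Set.Icc a b))
    (hΦ : ∀ x ∈ Set.Icc 0 (b - a), HasDerivAt Φ (Φ' x) x)
    (hΦ'c : ContinuousOn Φ' (Set.Icc 0 (b - a)))
    (hΦnn : ∀ x ∈ Set.Icc 0 (b - a), 0 ≤ Φ x)
    (hΦ'nn : ∀ x ∈ Set.Icc 0 (b - a), 0 ≤ Φ' x)
    (hΦ0 : Φ 0 = 0)
    (hsup : ∀ x y, a ≤ x → x ≤ y → y ≤ b → Φ' (y - x) ≤ f' y - f' x)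
    (n : ℕ) (hn : 0 < n) (w x : ℕ → ℝ) (A xbar : ℝ)
    (hA : A = ∑ i ∈ Finset.range n, w i) (hApos : 0 < A)
    (hJS : ∀ j ≤ n, 0 ≤ ∑ i ∈ Finset.range j, w i ∧ ∑ i ∈ Finset.range j, w i ≤ A)
    (hx : ∀ i < n, x i ∈ Set.Icc a b)
    (hmono : ∀ i j, i ≤ j → j < n → x i ≤ x j)
    (hxbar : xbar = (1 / A) * ∑ i ∈ Finset.range n, w i * x i) :
    f xbar + (1 / A) * ∑ i ∈ Finset.range n, w i * Φ |x i - xbar| ≤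
      (1 / A) * ∑ i ∈ Finset.range n, w i * f (x i) := by
  classical
  have hA0 : A ≠ 0 := ne_of_gt hApos
  have hsum : ∑ i ∈ Finset.range n, w i * x i = A * xbar := by
    rw [hxbar]; field_simp
  -- bounds on xbar
  have hIcoB : ∀ j, j ≤ n → 0 ≤ ∑ i ∈ Finset.Ico j n, w i := by
    intro j hj
    rw [Finset.sum_Ico_eq_sub _ hj, ← hA]
    have := (hJS j hj).2
    linarith
  have hAj : ∀ j, j ≤ n → 0 ≤ ∑ i ∈ Finset.range j, w i := fun j hj => (hJS j hj).1
  have hxub : xbar ≤ x (n - 1) := by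
    have h := abelA w (fun i => x (n - 1) - x i) n (fun j hj => hAj j hj)
      (fun i hi => by
        have := hmono i (i + 1) (Nat.le_succ i) hi
        linarith)
    simp only [Nat.sub_self, sub_self, mul_zero] at h
    have he : ∑ i ∈ Finset.range n, w i * (x (n - 1) - x i)
        = A * x (n - 1) - A * xbar := by
      simp only [mul_sub, Finset.sum_sub_distrib, ← Finset.sum_mul, ← hA, hsum]
    rw [he] at h
    nlinarith
  have hxlb : x 0 ≤ xbar := by
    have h := abelB w (fun i => x i - x 0) n n 0 (by omega) (fun j _ hj => hIcoB j hj)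
      (fun i _ hi => by
        have := hmono i (i + 1) (Nat.le_succ i) hi
        linarith)
    simp only [sub_self, mul_zero, ← Finset.range_eq_Ico] at h
    have he : ∑ i ∈ Finset.range n, w i * (x i - x 0)
        = A * xbar - A * x 0 := by
      simp only [mul_sub, Finset.sum_sub_distrib, ← Finset.sum_mul, ← hA, hsum]
    rw [he] at h
    nlinarith
  have hxb0 : x 0 ∈ Set.Icc a b := hx 0 hn
  have hxbn : x (n - 1) ∈ Set.Icc a b := hx (n - 1) (by omega)
  have hax : a ≤ xbar := le_trans hxb0.1 hxlb
  have hxb : xbar ≤ b := le_trans hxub hxbn.2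
  -- the auxiliary function
  set G : ℝ → ℝ := fun u => f u - Φ |u - xbar| - f' xbar * u with hGdef
  have hfc : ContinuousOn f (Set.Icc a b) := fun u hu =>
    (hf u hu).continuousAt.continuousWithinAt
  have hΦc : ContinuousOn Φ (Set.Icc 0 (b - a)) := fun u hu =>
    (hΦ u hu).continuousAt.continuousWithinAt
  have hmaps : ∀ u ∈ Set.Icc a b, |u - xbar| ∈ Set.Icc 0 (b - a) := by
    intro u hu
    constructor
    · exact abs_nonneg _
    · rw [abs_le]
      constructor <;> [linarith [hu.1, hxb]; linarith [hu.2, hax]]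
  have hGc : ContinuousOn G (Set.Icc a b) := by
    apply ContinuousOn.sub
    apply ContinuousOn.sub hfc
    · exact hΦc.comp ((continuous_abs.comp (continuous_id.sub continuous_const)).continuousOn)
        hmaps
    · exact (continuous_const.mul continuous_id).continuousOn
  -- derivative on the right of xbar
  have keyR : ∀ u ∈ Set.Ioo xbar b, HasDerivAt G (f' u - Φ' (u - xbar) - f' xbar) u := by
    intro u hu
    have hu1 : a ≤ u := le_trans hax hu.1.le
    have h1 : HasDerivAt f (f' u) u := hf u ⟨hu1, hu.2.le⟩
    have hmem : u - xbar ∈ Set.Icc 0 (b - a) := ⟨by linarith [hu.1], by linarith [hu.2]⟩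
    have h2 : HasDerivAt (fun v => Φ (v - xbar)) (Φ' (u - xbar)) u := by
      simpa [Function.comp_def] using (hΦ _ hmem).comp u ((hasDerivAt_id u).sub_const xbar)
    have h3 : (fun v => Φ |v - xbar|) =ᶠ[nhds u] (fun v => Φ (v - xbar)) := by
      filter_upwards [Ioi_mem_nhds hu.1] with v hv
      rw [abs_of_pos (sub_pos.mpr hv)]
    have h4 : HasDerivAt (fun v => Φ |v - xbar|) (Φ' (u - xbar)) u :=
      h2.congr_of_eventuallyEq h3
    have h5 : HasDerivAt (fun v => f' xbar * v) (f' xbar) u := by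
      simpa using (hasDerivAt_id u).const_mul (f' xbar)
    exact (h1.sub h4).sub h5
  -- derivative on the left of xbar
  have keyL : ∀ u ∈ Set.Ioo a xbar, HasDerivAt G (f' u + Φ' (xbar - u) - f' xbar) u := by
    intro u hu
    have hu2 : u ≤ b := le_trans hu.2.le hxb
    have h1 : HasDerivAt f (f' u) u := hf u ⟨hu.1.le, hu2⟩
    have hmem : xbar - u ∈ Set.Icc 0 (b - a) := ⟨by linarith [hu.2], by linarith [hu.1]⟩
    have h2 : HasDerivAt (fun v => Φ (xbar - v)) (-Φ' (xbar - u)) u := by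
      simpa [Function.comp_def] using (hΦ _ hmem).comp u ((hasDerivAt_id u).const_sub xbar)
    have h3 : (fun v => Φ |v - xbar|) =ᶠ[nhds u] (fun v => Φ (xbar - v)) := by
      filter_upwards [Iio_mem_nhds hu.2] with v hv
      rw [abs_of_neg (sub_neg.mpr hv), neg_sub]
    have h4 : HasDerivAt (fun v => Φ |v - xbar|) (-Φ' (xbar - u)) u :=
      h2.congr_of_eventuallyEq h3
    have h5 : HasDerivAt (fun v => f' xbar * v) (f' xbar) u := by
      simpa using (hasDerivAt_id u).const_mul (f' xbar)
    have := (h1.sub h4).sub h5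
    convert this using 1
    case e'_4 => rfl
    case e'_5 => rfl
    case e'_8 => rfl
    ring
  have hGmono : MonotoneOn G (Set.Icc xbar b) := by
    apply monotoneOn_of_deriv_nonneg (convex_Icc _ _)
      (hGc.mono (Set.Icc_subset_Icc hax le_rfl))
    · intro u hu
      rw [interior_Icc] at hu
      exact ((keyR u hu).differentiableAt).differentiableWithinAt
    · intro u hu
      rw [interior_Icc] at hu
      rw [(keyR u hu).deriv]
      have := hsup xbar u hax hu.1.le hu.2.le
      linarith
  have hGanti : AntitoneOn G (Set.Icc a xbar) := by
    apply antitoneOn_of_deriv_nonpos (convex_Icc _ _)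
      (hGc.mono (Set.Icc_subset_Icc le_rfl hxb))
    · intro u hu
      rw [interior_Icc] at hu
      exact ((keyL u hu).differentiableAt).differentiableWithinAt
    · intro u hu
      rw [interior_Icc] at hu
      rw [(keyL u hu).deriv]
      have := hsup u xbar hu.1.le hu.2.le hxb
      linarith
  -- the split point k
  obtain ⟨k, hkn, hkle, hkge⟩ : ∃ k, k ≤ n ∧ (∀ i < k, x i ≤ xbar) ∧
      (∀ i, k ≤ i → i < n → xbar ≤ x i) := by
    by_cases hex : ∃ i, i < n ∧ xbar ≤ x i
    · refine ⟨Nat.find hex, (Nat.find_spec hex).1.le, ?_, ?_⟩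
      · intro i hi
        have h := Nat.find_min hex hi
        push_neg at h
        exact (h (lt_of_lt_of_le hi (Nat.find_spec hex).1.le)).le
      · intro i hki hin
        exact le_trans (Nat.find_spec hex).2 (hmono _ i hki hin)
    · push_neg at hex
      exact ⟨n, le_rfl, fun i hi => (hex i hi).le, fun i hki hin => absurd hin (by omega)⟩
  have hmemL : ∀ i < k, x i ∈ Set.Icc a xbar := fun i hi =>
    ⟨(hx i (lt_of_lt_of_le hi hkn)).1, hkle i hi⟩
  have hmemR : ∀ i, k ≤ i → i < n → x i ∈ Set.Icc xbar b := fun i h1 h2 =>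
    ⟨hkge i h1 h2, (hx i h2).2⟩
  have hxbarL : xbar ∈ Set.Icc a xbar := ⟨hax, le_rfl⟩
  have hxbarR : xbar ∈ Set.Icc xbar b := ⟨le_rfl, hxb⟩
  -- part 1
  have hT1 : (∑ i ∈ Finset.range k, w i) * G xbar ≤ ∑ i ∈ Finset.range k, w i * G (x i) := by
    have h1 := abelA w (fun i => G (x i)) k (fun j hj => hAj j (le_trans hj hkn))
      (fun i hi => hGanti (hmemL i (by omega)) (hmemL (i + 1) (by omega))
        (hmono i (i + 1) (Nat.le_succ i) (by omega)))
    rcases Nat.eq_zero_or_pos k with hk | hk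
    · subst hk; simp
    · have h2 : G xbar ≤ G (x (k - 1)) :=
        hGanti (hmemL (k - 1) (by omega)) hxbarL (hkle (k - 1) (by omega))
      have h3 : 0 ≤ ∑ i ∈ Finset.range k, w i := hAj k hkn
      calc (∑ i ∈ Finset.range k, w i) * G xbar
          ≤ (∑ i ∈ Finset.range k, w i) * G (x (k - 1)) := mul_le_mul_of_nonneg_left h2 h3
        _ ≤ _ := h1
  -- part 2
  have hT2 : (∑ i ∈ Finset.Ico k n, w i) * G xbar ≤ ∑ i ∈ Finset.Ico k n, w i * G (x i) := by
    have h1 := abelB w (fun i => G (x i)) n (n - k) k (by omega)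
      (fun j hj hj' => hIcoB j hj')
      (fun i hi hi' => hGmono (hmemR i hi (by omega)) (hmemR (i + 1) (by omega) hi')
        (hmono i (i + 1) (Nat.le_succ i) (by omega)))
    rcases Nat.lt_or_ge k n with hk | hk
    · have h2 : G xbar ≤ G (x k) := hGmono hxbarR (hmemR k le_rfl hk) (hkge k le_rfl hk)
      have h3 : 0 ≤ ∑ i ∈ Finset.Ico k n, w i := hIcoB k hkn
      calc (∑ i ∈ Finset.Ico k n, w i) * G xbar
          ≤ (∑ i ∈ Finset.Ico k n, w i) * G (x k) := mul_le_mul_of_nonneg_left h2 h3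
        _ ≤ _ := h1
    · have he : Finset.Ico k n = ∅ := Finset.Ico_eq_empty (by omega)
      simp [he]
  -- combine
  have hsplitw : (∑ i ∈ Finset.range k, w i) + (∑ i ∈ Finset.Ico k n, w i) = A := by
    rw [hA, Finset.range_eq_Ico, Finset.range_eq_Ico]
    exact Finset.sum_Ico_consecutive _ (Nat.zero_le k) hkn
  have hsplitG : (∑ i ∈ Finset.range k, w i * G (x i)) + (∑ i ∈ Finset.Ico k n, w i * G (x i))
      = ∑ i ∈ Finset.range n, w i * G (x i) := by
    rw [Finset.range_eq_Ico, Finset.range_eq_Ico]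
    exact Finset.sum_Ico_consecutive _ (Nat.zero_le k) hkn
  have hmain : A * G xbar ≤ ∑ i ∈ Finset.range n, w i * G (x i) := by
    rw [← hsplitw, ← hsplitG, add_mul]
    exact add_le_add hT1 hT2
  have hGxbar : G xbar = f xbar - f' xbar * xbar := by
    simp [hGdef, hΦ0]
  have hGsum : ∑ i ∈ Finset.range n, w i * G (x i)
      = (∑ i ∈ Finset.range n, w i * f (x i)) - (∑ i ∈ Finset.range n, w i * Φ |x i - xbar|)
        - f' xbar * (A * xbar) := by
    rw [← hsum, Finset.mul_sum]
    rw [← Finset.sum_sub_distrib, ← Finset.sum_sub_distrib]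
    apply Finset.sum_congr rfl
    intro i _
    simp [hGdef]
    ring
  rw [hGxbar, hGsum] at hmain
  set Sf := ∑ i ∈ Finset.range n, w i * f (x i)
  set SΦ := ∑ i ∈ Finset.range n, w i * Φ |x i - xbar|
  have key : A * f xbar + SΦ ≤ Sf := by nlinarith [hmain]
  have h5 : (1 / A) * (A * f xbar + SΦ) ≤ (1 / A) * Sf :=
    mul_le_mul_of_nonneg_left key (by positivity)
  have h6 : (1 / A) * (A * f xbar + SΦ) = f xbar + (1 / A) * SΦ := by
    field_simp
  linarith
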